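/- Let r ≥ 3, and let Σ_{2r−1} and Σ_{2r−2} be the subcomplexes of (M_r)^{*2}_Δ generated by the facets of dimension 2r−1 and 2r−2, respectively. Then every face of (M_r)^{*2}_Δ lies in Σ_{2r−1} or Σ_{2r−2}; i.e., every facet of (M_r)^{*2}_Δ has dimension 2r−1 or 2r−2. -/
import Mathlib


/-- Independence in the matroid `M_r` (ground set `Fin r × Fin r`; `(i,j)` is `v_{i+1}^{j+1}`
for `i < r-1` and `w_{j+1}` for `i = r-1`). -/
def MrIndep (r : ℕ) (A : Finset (Fin r × Fin r)) : Prop :=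
  A.card ≤ r ∧ ∀ i : Fin r, (i : ℕ) < r - 1 → (A.filter (fun p => p.1 = i)).card ≤ 1

/-- A face of the `2`-fold deleted join `(M_r)^{*2}_Δ`. -/
def Face2 (r : ℕ) (p : Finset (Fin r × Fin r) × Finset (Fin r × Fin r)) : Prop :=
  MrIndep r p.1 ∧ MrIndep r p.2 ∧ Disjoint p.1 p.2

/-- A facet of `(M_r)^{*2}_Δ`: a face maximal under componentwise inclusion. -/
def Facet2 (r : ℕ) (p : Finset (Fin r × Fin r) × Finset (Fin r × Fin r)) : Prop :=
  Face2 r p ∧ ∀ q, Face2 r q → p.1 ⊆ q.1 → p.2 ⊆ q.2 → q = p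

lemma row_card_aux (r : ℕ) (hr : 3 ≤ r) :
    (Finset.univ.filter (fun i : Fin r => (i:ℕ) < r - 1)).card = r - 1 := by
  have : (Finset.univ.filter (fun i : Fin r => (i:ℕ) < r - 1))
      = Finset.Iio (⟨r-1, by omega⟩ : Fin r) := by
    ext i; simp [Fin.lt_def]
  rw [this]; simp

lemma row_outside_aux (r : ℕ) (hr : 3 ≤ r) (A B : Finset (Fin r × Fin r))
    (hA : MrIndep r A) (hB : MrIndep r B) (i : Fin r) (hi : (i:ℕ) < r - 1) :
    ∃ j : Fin r, (i, j) ∉ A ∪ B := by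
  by_contra h
  push_neg at h
  have hsub : Finset.univ.image (fun j : Fin r => ((i, j) : Fin r × Fin r))
      ⊆ (A ∪ B).filter (fun p => p.1 = i) := by
    intro x hx
    simp only [Finset.mem_image, Finset.mem_univ, true_and] at hx
    obtain ⟨j, rfl⟩ := hx
    simp [Finset.mem_filter, h j]
  have hcard1 : (Finset.univ.image (fun j : Fin r => ((i, j) : Fin r × Fin r))).card = r := by
    rw [Finset.card_image_of_injective _ (fun a b hab => by simpa using hab)]
    simp
  have hcard2 : ((A ∪ B).filter (fun p => p.1 = i)).card ≤ 2 := by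
    have h1 := hA.2 i hi
    have h2 := hB.2 i hi
    calc ((A ∪ B).filter (fun p => p.1 = i)).card
        ≤ (A.filter (fun p => p.1 = i)).card + (B.filter (fun p => p.1 = i)).card := by
          rw [Finset.filter_union]; exact Finset.card_union_le _ _
      _ ≤ 2 := by omega
  have := Finset.card_le_card hsub
  omega

lemma key_aux (r : ℕ) (hr : 3 ≤ r) (A B : Finset (Fin r × Fin r))
    (hA : MrIndep r A) (hB : MrIndep r B)
    (hmax : ∀ x, x ∉ A ∪ B → ¬ MrIndep r (insert x A))
    (hAB : A.card ≤ B.card)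
    (hcard : A.card + B.card ≤ 2 * r - 2) : False := by
  have hBr : B.card ≤ r := hB.1
  have hAr : A.card ≤ r - 1 := by omega
  -- every restricted row contains an element of A
  have hrow : ∀ i : Fin r, (i:ℕ) < r - 1 → ∃ x ∈ A, x.1 = i := by
    intro i hi
    obtain ⟨j, hj⟩ := row_outside_aux r hr A B hA hB i hi
    by_contra hno
    push_neg at hno
    apply hmax (i, j) hj
    constructor
    · rw [Finset.card_insert_of_notMem (fun hm => hj (Finset.mem_union_left _ hm))]
      omega
    · intro i' hi'
      rw [Finset.filter_insert]
      by_cases hii : i = i'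
      · subst hii
        have hempty : A.filter (fun p => p.1 = i) = ∅ := by
          rw [Finset.filter_eq_empty_iff]
          intro x hx hxe
          exact hno x hx hxe
        simp [hempty]
      · rw [if_neg hii]
        exact hA.2 i' hi'
  -- the restricted part of A surjects (via fst) onto the restricted rows
  set A' := A.filter (fun y => (y.1:ℕ) < r - 1) with hA'
  have hsub2 : (Finset.univ.filter (fun i : Fin r => (i:ℕ) < r - 1))
      ⊆ A'.image Prod.fst := by
    intro i hi
    simp only [Finset.mem_filter, Finset.mem_univ, true_and] at hi
    obtain ⟨x, hx, hxe⟩ := hrow i hi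
    exact Finset.mem_image.mpr ⟨x, Finset.mem_filter.mpr ⟨hx, by rw [hxe]; exact hi⟩, hxe⟩
  have h1 : r - 1 ≤ (A'.image Prod.fst).card := by
    have := Finset.card_le_card hsub2
    rwa [row_card_aux r hr] at this
  have h2 : (A'.image Prod.fst).card ≤ A'.card := Finset.card_image_le
  have h3 : A'.card ≤ A.card := Finset.card_filter_le _ _
  -- so A.card = r - 1 and A has no element in the last row
  have hAcard : A.card = r - 1 := by omega
  have hsplit : A'.card + (A.filter (fun y => ¬ (y.1:ℕ) < r - 1)).card = A.card := by
    rw [hA']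
    exact Finset.card_filter_add_card_filter_not (s := A) (p := fun (y : Fin r × Fin r) => (y.1:ℕ) < r - 1)
  have hlastA : ∀ x ∈ A, (x.1:ℕ) < r - 1 := by
    intro x hx
    by_contra hxl
    have hxmem : x ∈ A.filter (fun y => ¬ (y.1:ℕ) < r - 1) :=
      Finset.mem_filter.mpr ⟨hx, hxl⟩
    have : 1 ≤ (A.filter (fun y => ¬ (y.1:ℕ) < r - 1)).card :=
      Finset.card_pos.mpr ⟨x, hxmem⟩
    omega
  -- every last-row element is in A ∪ B, hence in B
  set L : Fin r := ⟨r - 1, by omega⟩ with hL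
  have hlastB : ∀ j : Fin r, (L, j) ∈ B := by
    intro j
    have hmem : (L, j) ∈ A ∪ B := by
      by_contra hj
      apply hmax (L, j) hj
      constructor
      · rw [Finset.card_insert_of_notMem (fun hm => hj (Finset.mem_union_left _ hm))]
        omega
      · intro i' hi'
        rw [Finset.filter_insert, if_neg]
        · exact hA.2 i' hi'
        · intro h
          have hLi : L = i' := h
          have := congrArg Fin.val hLi
          simp only [hL] at this
          omega
    rcases Finset.mem_union.mp hmem with h | h
    · exact absurd (hlastA _ h) (by simp [hL])
    · exact h
  have hBsub : Finset.univ.image (fun j : Fin r => ((L, j) : Fin r × Fin r)) ⊆ B := by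
    intro x hx
    simp only [Finset.mem_image, Finset.mem_univ, true_and] at hx
    obtain ⟨j, rfl⟩ := hx
    exact hlastB j
  have hBcard : r ≤ B.card := by
    have := Finset.card_le_card hBsub
    rwa [Finset.card_image_of_injective _ (fun a b hab => by simpa using hab),
      Finset.card_univ, Fintype.card_fin] at this
  omega


/-- Every facet of `(M_r)^{*2}_Δ` has cardinality `2r-1` or `2r`, i.e. every face lies in
the subcomplex generated by the facets of dimension `2r-1` or in the one generated by the
facets of dimension `2r-2`. -/
theorem stmt15 (r : ℕ) (hr : 3 ≤ r) :
    ∀ p : Finset (Fin r × Fin r) × Finset (Fin r × Fin r),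
      Facet2 r p → p.1.card + p.2.card = 2 * r - 1 ∨ p.1.card + p.2.card = 2 * r := by
  intro p hp
  obtain ⟨⟨hA, hB, hd⟩, hmax⟩ := hp
  have hub : p.1.card + p.2.card ≤ 2 * r := by
    have := hA.1; have := hB.1; omega
  have hmax1 : ∀ x, x ∉ p.1 ∪ p.2 → ¬ MrIndep r (insert x p.1) := by
    intro x hx hind
    have hxA : x ∉ p.1 := fun h => hx (Finset.mem_union_left _ h)
    have hxB : x ∉ p.2 := fun h => hx (Finset.mem_union_right _ h)
    have hface : Face2 r (insert x p.1, p.2) := by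
      refine ⟨hind, hB, ?_⟩
      rw [Finset.disjoint_insert_left]
      exact ⟨hxB, hd⟩
    have heq := hmax (insert x p.1, p.2) hface (Finset.subset_insert _ _) (subset_refl _)
    have : insert x p.1 = p.1 := congrArg Prod.fst heq
    exact hxA (this ▸ Finset.mem_insert_self x p.1)
  have hmax2 : ∀ x, x ∉ p.2 ∪ p.1 → ¬ MrIndep r (insert x p.2) := by
    intro x hx hind
    have hxB : x ∉ p.2 := fun h => hx (Finset.mem_union_left _ h)
    have hxA : x ∉ p.1 := fun h => hx (Finset.mem_union_right _ h)
    have hface : Face2 r (p.1, insert x p.2) := by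
      refine ⟨hA, hind, ?_⟩
      rw [Finset.disjoint_insert_right]
      exact ⟨hxA, hd⟩
    have heq := hmax (p.1, insert x p.2) hface (subset_refl _) (Finset.subset_insert _ _)
    have : insert x p.2 = p.2 := congrArg Prod.snd heq
    exact hxB (this ▸ Finset.mem_insert_self x p.2)
  have hlb : ¬ (p.1.card + p.2.card ≤ 2 * r - 2) := by
    intro hle
    rcases le_total p.1.card p.2.card with h | h
    · exact key_aux r hr p.1 p.2 hA hB hmax1 h hle
    · exact key_aux r hr p.2 p.1 hB hA hmax2 h (by omega)
  omega
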